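/- If λ is a partition with distinct parts that is simultaneously a t-core and a (t+1)-core (t ≥ 2), then every element of its β-set is at most t-1. -/

import Mathlib

/-- The β-set of a partition given as a list (λ_1, ..., λ_ℓ):
the set {λ_i + ℓ - i : 1 ≤ i ≤ ℓ} of first-column hook lengths. -/
def betaSet (l : List ℕ) : Finset ℕ :=
  Finset.image (fun i => l.getD i 0 + (l.length - 1 - i)) (Finset.range l.length)

/-- A partition is an s-core iff for every x in its β-set with x ≥ s, also x - s is in the β-set. -/
def IsCoreBeta (l : List ℕ) (s : ℕ) : Prop :=
  ∀ x ∈ betaSet l, s ≤ x → x - s ∈ betaSet l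

lemma beta_gap (l : List ℕ) (hsort : l.Pairwise (· ≥ ·)) (hdist : l.Nodup)
    {i j : ℕ} (hij : i < j) (hj : j < l.length) :
    l.getD j 0 + (l.length - 1 - j) + 2 ≤ l.getD i 0 + (l.length - 1 - i) := by
  have hi : i < l.length := hij.trans hj
  have h1 : l.get ⟨i, hi⟩ ≥ l.get ⟨j, hj⟩ :=
    List.pairwise_iff_get.mp hsort ⟨i, hi⟩ ⟨j, hj⟩ hij
  have h2 : l.get ⟨i, hi⟩ ≠ l.get ⟨j, hj⟩ := by
    intro h
    have := List.nodup_iff_injective_get.mp hdist h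
    simp only [Fin.mk.injEq] at this
    omega
  have e1 : l.getD i 0 = l.get ⟨i, hi⟩ := List.getD_eq_get l 0 ⟨i, hi⟩
  have e2 : l.getD j 0 = l.get ⟨j, hj⟩ := List.getD_eq_get l 0 ⟨j, hj⟩
  rw [e1, e2]
  omega

/-- If λ is a (t, t+1)-core partition with distinct parts, then every element of its β-set
is at most t - 1. -/
theorem beta_bounded (t : ℕ) (ht : 2 ≤ t) (l : List ℕ)
    (hsort : l.Pairwise (· ≥ ·)) (hpos : ∀ p ∈ l, 0 < p) (hdist : l.Nodup)
    (hcore1 : IsCoreBeta l t) (hcore2 : IsCoreBeta l (t + 1)) :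
    ∀ x ∈ betaSet l, x ≤ t - 1 := by
  have h0 : (0 : ℕ) ∉ betaSet l := by
    simp only [betaSet, Finset.mem_image, Finset.mem_range, not_exists]
    rintro i ⟨hi, hzero⟩
    have e1 : l.getD i 0 = l.get ⟨i, hi⟩ := List.getD_eq_get l 0 ⟨i, hi⟩
    have := hpos (l.get ⟨i, hi⟩) (List.get_mem l ⟨i, hi⟩)
    omega
  intro x hx
  by_contra hcon
  push_neg at hcon
  have hx_t : t ≤ x := by omega
  rcases eq_or_lt_of_le hx_t with heq | hlt
  · have := hcore1 x hx hx_t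
    rw [← heq, Nat.sub_self] at this
    exact h0 this
  · have h1 := hcore1 x hx hx_t
    have h2 := hcore2 x hx hlt
    obtain ⟨i, hi, hfi⟩ := Finset.mem_image.mp h1
    obtain ⟨j, hj, hfj⟩ := Finset.mem_image.mp h2
    simp only [Finset.mem_range] at hi hj
    rcases lt_trichotomy i j with h' | h' | h'
    · have := beta_gap l hsort hdist h' hj
      omega
    · subst h'; omega
    · have := beta_gap l hsort hdist h' hi
      omega
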